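/- Let $I \subset R = K[x_1,\ldots,x_n]$ be a square-free monomial ideal, let $\mathfrak{p}$ be a monomial prime ideal with $\mathrm{ht}\,\mathfrak{p} = m$, and let $u_1,\ldots,u_m \in I$ be pairwise coprime monomials contained in $\mathfrak{p}$ (an independent set of generators of size $m$). Then $(\mathfrak{p}^r : \prod_{i=1}^m u_i) = \mathfrak{p}^{r-m}$ for all $r > m$. -/

import Mathlib

open MvPolynomial

/-- A square-free monomial ideal: generated by square-free monomials. -/
def IsSqFreeMonomialIdeal {n : ℕ} {K : Type*} [Field K]
    (I : Ideal (MvPolynomial (Fin n) K)) : Prop :=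
  ∃ S : Set (Fin n →₀ ℕ), (∀ d ∈ S, ∀ i, d i ≤ 1) ∧
    I = Ideal.span ((fun d => (monomial d (1 : K) : MvPolynomial (Fin n) K)) '' S)


section Aux
variable {n : ℕ} {K : Type*} [Field K]

/-- The ideal of polynomials all of whose monomials have `T`-degree at least `r`. -/
def degIdeal (T : Finset (Fin n)) (K : Type*) [Field K] (r : ℕ) :
    Ideal (MvPolynomial (Fin n) K) where
  carrier := {f | ∀ e ∈ f.support, r ≤ ∑ j ∈ T, e j}
  zero_mem' := by simp
  add_mem' := by
    intro a b ha hb e he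
    rcases Finset.mem_union.mp (Finsupp.support_add he) with h | h
    · exact ha e h
    · exact hb e h
  smul_mem' := by
    classical
    intro c f hf e he
    rw [smul_eq_mul] at he
    obtain ⟨a, ha, b, hb, rfl⟩ := Finset.mem_add.mp (MvPolynomial.support_mul c f he)
    calc r ≤ ∑ j ∈ T, b j := hf b hb
    _ ≤ ∑ j ∈ T, (a + b) j := Finset.sum_le_sum fun j _ => by simp

lemma pTdeg (T : Finset (Fin n)) (r : ℕ) :
    (Ideal.span ((fun i => (X i : MvPolynomial (Fin n) K)) '' (T : Set (Fin n)))) ^ r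
      ≤ degIdeal T K r := by
  induction r with
  | zero => intro f _ e _; simp
  | succ r ih =>
      rw [pow_succ, Ideal.mul_le]
      intro f hf g hg e he
      classical
      obtain ⟨a, ha, b, hb, rfl⟩ := Finset.mem_add.mp (MvPolynomial.support_mul f g he)
      have h1 : 1 ≤ ∑ j ∈ T, b j := by
        have hg' : g ∈ degIdeal T K 1 := by
          revert hg
          refine fun hg => Ideal.span_le.mpr ?_ hg
          rintro _ ⟨i, hi, rfl⟩ e he
          rw [MvPolynomial.support_X, Finset.mem_singleton] at he
          subst he
          rw [Finset.sum_eq_single i (fun j _ hj => Finsupp.single_eq_of_ne hj)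
            (fun h => absurd hi h)]
          simp
        exact hg' b hb
      have h2 : r ≤ ∑ j ∈ T, a j := ih hf a ha
      have : (r : ℕ) + 1 ≤ (∑ j ∈ T, a j) + ∑ j ∈ T, b j := add_le_add h2 h1
      calc r + 1 ≤ (∑ j ∈ T, a j) + ∑ j ∈ T, b j := this
      _ = ∑ j ∈ T, (a + b) j := by rw [← Finset.sum_add_distrib]; simp

lemma monomial_mem_pow (T : Finset (Fin n)) (e : Fin n →₀ ℕ) (c : K) (r : ℕ)
    (h : r ≤ ∑ j ∈ T, e j) :
    (monomial e c : MvPolynomial (Fin n) K)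
      ∈ (Ideal.span ((fun i => (X i : MvPolynomial (Fin n) K)) '' (T : Set (Fin n)))) ^ r := by
  set p := Ideal.span ((fun i => (X i : MvPolynomial (Fin n) K)) '' (T : Set (Fin n))) with hp
  suffices H : ∀ s : ℕ, ∀ e : Fin n →₀ ℕ, s = ∑ j ∈ T, e j →
      (monomial e c : MvPolynomial (Fin n) K) ∈ p ^ s by
    exact Ideal.pow_le_pow_right h (H _ e rfl)
  intro s
  induction s with
  | zero => intro e _; simp
  | succ s ih =>
      intro e hs
      have hne : ∃ j ∈ T, e j ≠ 0 := by
        by_contra hc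
        push_neg at hc
        rw [Finset.sum_eq_zero hc] at hs
        omega
      obtain ⟨j, hjT, hj⟩ := hne
      have hle : Finsupp.single j 1 ≤ e := Finsupp.single_le_iff.mpr (by omega)
      set e' := e - Finsupp.single j 1 with he'
      have hee : e' + Finsupp.single j 1 = e := tsub_add_cancel_of_le hle
      have hsum : s = ∑ j' ∈ T, e' j' := by
        have : ∑ j' ∈ T, e' j' = (∑ j' ∈ T, e j') - ∑ j' ∈ T, (Finsupp.single j 1) j' := by
          rw [he']
          simp only [Finsupp.tsub_apply]
          exact Finset.sum_tsub_distrib T fun x _ => hle x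
        rw [this, Finset.sum_eq_single j (fun j' _ hj' => Finsupp.single_eq_of_ne hj')
            (fun h => absurd hjT h), Finsupp.single_eq_same, ← hs]
        omega
      have : (monomial e c : MvPolynomial (Fin n) K)
          = monomial e' c * monomial (Finsupp.single j 1) 1 := by
        rw [monomial_mul, mul_one, hee]
      rw [this, pow_succ]
      exact Ideal.mul_mem_mul (ih e' hsum)
        (Ideal.subset_span ⟨j, hjT, rfl⟩)

lemma mem_pow_iff (T : Finset (Fin n)) (r : ℕ) (f : MvPolynomial (Fin n) K) :
    f ∈ (Ideal.span ((fun i => (X i : MvPolynomial (Fin n) K)) '' (T : Set (Fin n)))) ^ r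
      ↔ ∀ e ∈ f.support, r ≤ ∑ j ∈ T, e j := by
  constructor
  · exact fun h => pTdeg T r h
  · intro h
    rw [f.as_sum]
    exact Ideal.sum_mem _ fun e he => monomial_mem_pow T e _ r (h e he)

end Aux

theorem stmt6 {n : ℕ} {K : Type*} [Field K]
    (I : Ideal (MvPolynomial (Fin n) K)) (hI : IsSqFreeMonomialIdeal I)
    (m : ℕ) (T : Finset (Fin n)) (hT : T.card = m)
    (p : Ideal (MvPolynomial (Fin n) K))
    (hp : p = Ideal.span ((fun i => (X i : MvPolynomial (Fin n) K)) '' (T : Set (Fin n))))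
    (d : Fin m → (Fin n →₀ ℕ))
    (hsf : ∀ i : Fin m, ∀ j : Fin n, d i j ≤ 1)
    (hcop : ∀ i j : Fin m, i ≠ j → Disjoint (d i).support (d j).support)
    (hmemI : ∀ i : Fin m, (monomial (d i) (1 : K) : MvPolynomial (Fin n) K) ∈ I)
    (hmemp : ∀ i : Fin m, (monomial (d i) (1 : K) : MvPolynomial (Fin n) K) ∈ p)
    (r : ℕ) (hr : m < r) :
    Submodule.colon (p ^ r)
      (Ideal.span {∏ i : Fin m, (monomial (d i) (1 : K) : MvPolynomial (Fin n) K)})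
      = p ^ (r - m) := by
  classical
  subst hp
  set D : Fin n →₀ ℕ := ∑ i : Fin m, d i with hD
  have hu : (∏ i : Fin m, (monomial (d i) (1 : K) : MvPolynomial (Fin n) K))
      = monomial D (1 : K) := (monomial_sum_one Finset.univ d).symm
  -- τ(d i) ≥ 1 for each i
  have hτi : ∀ i : Fin m, 1 ≤ ∑ j ∈ T, d i j := by
    intro i
    have h1 := hmemp i
    rw [show (Ideal.span ((fun i => (X i : MvPolynomial (Fin n) K)) '' (T : Set (Fin n))))
        = (Ideal.span ((fun i => (X i : MvPolynomial (Fin n) K)) '' (T : Set (Fin n)))) ^ 1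
        from (pow_one _).symm, mem_pow_iff] at h1
    exact h1 (d i) (by rw [support_monomial]; simp)
  -- D j ≤ 1 for each j
  have hDj : ∀ j : Fin n, D j ≤ 1 := by
    intro j
    rw [hD, Finsupp.finset_sum_apply]
    by_cases hz : ∀ i : Fin m, d i j = 0
    · simp [hz]
    · push_neg at hz
      obtain ⟨i0, hi0⟩ := hz
      rw [Finset.sum_eq_single i0 (fun b _ hb => by
        by_contra hbz
        exact Finset.disjoint_left.mp (hcop b i0 hb) (Finsupp.mem_support_iff.mpr hbz)
          (Finsupp.mem_support_iff.mpr hi0)) (fun h => absurd (Finset.mem_univ i0) h)]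
      exact hsf i0 j
  have hτD_ge : m ≤ ∑ j ∈ T, D j := by
    have : ∑ j ∈ T, D j = ∑ i : Fin m, ∑ j ∈ T, d i j := by
      rw [hD]
      simp only [Finsupp.finset_sum_apply]
      exact Finset.sum_comm
    rw [this]
    calc m = ∑ _i : Fin m, 1 := by simp
    _ ≤ ∑ i : Fin m, ∑ j ∈ T, d i j := Finset.sum_le_sum fun i _ => hτi i
  have hτD_le : ∑ j ∈ T, D j ≤ m := by
    calc ∑ j ∈ T, D j ≤ ∑ _j ∈ T, 1 := Finset.sum_le_sum fun j _ => hDj j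
    _ = m := by simp [hT]
  ext f
  rw [hu, Ideal.mem_colon_span_singleton, mem_pow_iff, mem_pow_iff]
  constructor
  · intro h e he
    have hc : coeff (e + D) (f * monomial D (1 : K)) ≠ 0 := by
      rw [coeff_mul_monomial, mul_one]
      exact MvPolynomial.mem_support_iff.mp he
    have := h (e + D) (MvPolynomial.mem_support_iff.mpr hc)
    have hsum : ∑ j ∈ T, (e + D) j = (∑ j ∈ T, e j) + ∑ j ∈ T, D j := by
      rw [← Finset.sum_add_distrib]; simp
    rw [hsum] at this
    omega
  · intro h
    have hf : f ∈ (Ideal.span ((fun i => (X i : MvPolynomial (Fin n) K)) ''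
        (T : Set (Fin n)))) ^ (r - m) := (mem_pow_iff T (r - m) f).mpr h
    have hum : (monomial D (1 : K) : MvPolynomial (Fin n) K)
        ∈ (Ideal.span ((fun i => (X i : MvPolynomial (Fin n) K)) ''
        (T : Set (Fin n)))) ^ m := monomial_mem_pow T D 1 m hτD_ge
    have := Ideal.mul_mem_mul hf hum
    rw [← pow_add, Nat.sub_add_cancel hr.le] at this
    exact (mem_pow_iff T r _).mp this
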